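/- Let z₀ ∈ ℂ with z₀ ≠ 0 and |1/z₀ + i| ≠ 1. Then the function z(t) = 1/(e^{−it}(1/z₀ + i) − i) is defined for all t ∈ ℝ, satisfies z(0) = z₀, solves the differential equation z′(t) = i·z(t) − z(t)², and is periodic of period 2π: z(t + 2π) = z(t) for all t ∈ ℝ. Hence the two centers of the system ż = iz − z² are isochronous with period 2π. -/

import Mathlib

open Complex

/-- The two centers of `ż = iz − z²` are isochronous of period `2π`:
for `z₀ ≠ 0` with `|1/z₀ + i| ≠ 1`, the function
`z(t) = 1/(e^{−it}(1/z₀ + i) − i)` is defined for all real `t`, satisfies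
`z(0) = z₀`, solves `z′ = iz − z²`, and is `2π`-periodic. -/
theorem isochronous_period_two_pi (z₀ : ℂ) (hz₀ : z₀ ≠ 0)
    (habs : ‖1 / z₀ + I‖ ≠ 1) :
    (∀ t : ℝ, Complex.exp (-I * t) * (1 / z₀ + I) - I ≠ 0)
    ∧ (fun t : ℝ => 1 / (Complex.exp (-I * t) * (1 / z₀ + I) - I)) 0 = z₀
    ∧ (∀ t : ℝ, HasDerivAt (fun t : ℝ => 1 / (Complex.exp (-I * t) * (1 / z₀ + I) - I))
        (I * (1 / (Complex.exp (-I * t) * (1 / z₀ + I) - I))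
          - (1 / (Complex.exp (-I * t) * (1 / z₀ + I) - I)) ^ 2) t)
    ∧ (∀ t : ℝ, (1 : ℂ) / (Complex.exp (-I * ((t + 2 * Real.pi) : ℝ)) * (1 / z₀ + I) - I)
        = 1 / (Complex.exp (-I * t) * (1 / z₀ + I) - I)) := by
  have hne : ∀ t : ℝ, Complex.exp (-I * t) * (1 / z₀ + I) - I ≠ 0 := by
    intro t h
    apply habs
    have h' : Complex.exp (-I * t) * (1 / z₀ + I) = I := by
      linear_combination h
    have := congrArg (‖·‖) h'
    rw [norm_mul, Complex.norm_exp] at this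
    simp at this
    simpa using this
  refine ⟨hne, ?_, ?_, ?_⟩
  · simp [hz₀]
  · intro t
    have h1 : HasDerivAt (fun t : ℝ => (-I * t : ℂ)) (-I) t := by
      simpa using (Complex.ofRealCLM.hasDerivAt (x := t)).const_mul (-I)
    have h2 := ((h1.cexp.mul_const (1 / z₀ + I)).sub_const I)
    have h3 := (hasDerivAt_const t (1:ℂ)).div h2 (hne t)
    refine HasDerivAt.congr_deriv h3 ?_
    have hd := hne t
    set d := Complex.exp (-I * t) * (1 / z₀ + I) - I with hdd
    have hew : Complex.exp (-I * t) * (1 / z₀ + I) = d + I := by rw [hdd]; ring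
    clear hdd
    clear_value d
    rw [show (0 * d - 1 * (Complex.exp (-I * t) * -I * (1 / z₀ + I))) = I * d - 1 by
      rw [show Complex.exp (-I * t) * -I * (1 / z₀ + I) = -I * (d + I) by rw [← hew]; ring]
      linear_combination Complex.I_sq]
    field_simp
  · intro t
    have : Complex.exp (-I * ((t + 2 * Real.pi) : ℝ)) = Complex.exp (-I * t) := by
      rw [Complex.ofReal_add]
      rw [show (-I * ((t : ℂ) + (2 * Real.pi : ℝ))) = -I * t + (-(2 * Real.pi : ℝ)) * I by push_cast; ring]
      rw [Complex.exp_add]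
      simp [Complex.exp_neg, Complex.exp_two_pi_mul_I]
    rw [this]
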